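/- The function a satisfies the second-order equation a''(r) = a(r)·κ(a(r), b(r), c(r)) for all r in I; explicitly, 2·a(r)·b(r)²·c(r)²·a''(r) = 2a⁴ − a²(b−c)² − a³(b+c) + a(b−c)²(b+c) − (b+c)²(b−c)² evaluated at r. By the cyclic symmetry of the system, also b''(r) = b(r)·κ(b(r), c(r), a(r)) and c''(r) = c(r)·κ(c(r), a(r), b(r)). -/

import Mathlib

/-- The curvature quantity `κ(a,b,c)` of the Atiyah–Hitchin manifold. -/
noncomputable def kappa (a b c : ℝ) : ℝ :=
  (2 * a ^ 4 - a ^ 2 * (b - c) ^ 2 - a ^ 3 * (b + c)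
    + a * (b - c) ^ 2 * (b + c) - (b + c) ^ 2 * (b - c) ^ 2) / (2 * (a * b * c) ^ 2)

lemma ah_key
    (I : Set ℝ) (hIopen : IsOpen I)
    (a b c a' b' c' a'' : ℝ → ℝ)
    (hda : ∀ r ∈ I, HasDerivAt a (a' r) r)
    (hdb : ∀ r ∈ I, HasDerivAt b (b' r) r)
    (hdc : ∀ r ∈ I, HasDerivAt c (c' r) r)
    (hdda : ∀ r ∈ I, HasDerivAt a' (a'' r) r)
    (hne : ∀ r ∈ I, a r * b r * c r ≠ 0)
    (hODEa : ∀ r ∈ I, a' r = (a r ^ 2 - (b r - c r) ^ 2) / (2 * b r * c r))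
    (hODEb : ∀ r ∈ I, b' r = (b r ^ 2 - (c r - a r) ^ 2) / (2 * c r * a r))
    (hODEc : ∀ r ∈ I, c' r = (c r ^ 2 - (a r - b r) ^ 2) / (2 * a r * b r)) :
    ∀ r ∈ I, a'' r = a r * kappa (a r) (b r) (c r) := by
  intro r hr
  have ha : a r ≠ 0 := fun h => hne r hr (by rw [h]; ring)
  have hb : b r ≠ 0 := fun h => hne r hr (by rw [h]; ring)
  have hc : c r ≠ 0 := fun h => hne r hr (by rw [h]; ring)
  have hden : 2 * b r * c r ≠ 0 := by positivity
  have hg : HasDerivAt (fun r => (a r ^ 2 - (b r - c r) ^ 2) / (2 * b r * c r))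
      (((2 * a r * a' r - 2 * (b r - c r) * (b' r - c' r)) * (2 * b r * c r)
        - (a r ^ 2 - (b r - c r) ^ 2) * (2 * b' r * c r + 2 * b r * c' r))
        / (2 * b r * c r) ^ 2) r := by
    have h1 := ((hda r hr).pow 2).sub (((hdb r hr).sub (hdc r hr)).pow 2)
    have h2 := ((hdb r hr).const_mul (2:ℝ)).mul (hdc r hr)
    have h3 := h1.div h2 hden
    refine HasDerivAt.congr_deriv h3 ?_
    simp only [Pi.mul_apply, Pi.sub_apply, Pi.pow_apply]
    push_cast
    ring
  have heq : a' =ᶠ[nhds r] fun r => (a r ^ 2 - (b r - c r) ^ 2) / (2 * b r * c r) := by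
    filter_upwards [hIopen.mem_nhds hr] with x hx using hODEa x hx
  have h4 : a'' r = _ := (hdda r hr).unique (hg.congr_of_eventuallyEq heq)
  rw [h4, hODEa r hr, hODEb r hr, hODEc r hr, kappa]
  field_simp
  ring

/-- For solutions `a, b, c` of the Atiyah–Hitchin ODE system on an open interval `I`
with `a·b·c ≠ 0`, the second derivatives satisfy `a'' = a·κ(a,b,c)`, explicitly
`2ab²c²·a'' = 2a⁴ − a²(b−c)² − a³(b+c) + a(b−c)²(b+c) − (b+c)²(b−c)²`, and by cyclic
symmetry `b'' = b·κ(b,c,a)` and `c'' = c·κ(c,a,b)`. -/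
theorem atiyah_hitchin_second_derivatives
    (I : Set ℝ) (hIopen : IsOpen I) (hIconn : I.OrdConnected)
    (a b c a' b' c' a'' b'' c'' : ℝ → ℝ)
    (hda : ∀ r ∈ I, HasDerivAt a (a' r) r)
    (hdb : ∀ r ∈ I, HasDerivAt b (b' r) r)
    (hdc : ∀ r ∈ I, HasDerivAt c (c' r) r)
    (hdda : ∀ r ∈ I, HasDerivAt a' (a'' r) r)
    (hddb : ∀ r ∈ I, HasDerivAt b' (b'' r) r)
    (hddc : ∀ r ∈ I, HasDerivAt c' (c'' r) r)
    (hne : ∀ r ∈ I, a r * b r * c r ≠ 0)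
    (hODEa : ∀ r ∈ I, a' r = (a r ^ 2 - (b r - c r) ^ 2) / (2 * b r * c r))
    (hODEb : ∀ r ∈ I, b' r = (b r ^ 2 - (c r - a r) ^ 2) / (2 * c r * a r))
    (hODEc : ∀ r ∈ I, c' r = (c r ^ 2 - (a r - b r) ^ 2) / (2 * a r * b r)) :
    ∀ r ∈ I,
      a'' r = a r * kappa (a r) (b r) (c r) ∧
      2 * a r * b r ^ 2 * c r ^ 2 * a'' r
        = 2 * a r ^ 4 - a r ^ 2 * (b r - c r) ^ 2 - a r ^ 3 * (b r + c r)
          + a r * (b r - c r) ^ 2 * (b r + c r) - (b r + c r) ^ 2 * (b r - c r) ^ 2 ∧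
      b'' r = b r * kappa (b r) (c r) (a r) ∧
      c'' r = c r * kappa (c r) (a r) (b r) := by
  intro r hr
  have hneb : ∀ r ∈ I, b r * c r * a r ≠ 0 := fun r hr => by
    have := hne r hr; intro h; exact this (by rw [← h]; ring)
  have hnec : ∀ r ∈ I, c r * a r * b r ≠ 0 := fun r hr => by
    have := hne r hr; intro h; exact this (by rw [← h]; ring)
  have hA := ah_key I hIopen a b c a' b' c' a'' hda hdb hdc hdda hne hODEa hODEb hODEc r hr
  have hB := ah_key I hIopen b c a b' c' a' b'' hdb hdc hda hddb hneb hODEb hODEc hODEa r hr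
  have hC := ah_key I hIopen c a b c' a' b' c'' hdc hda hdb hddc hnec hODEc hODEa hODEb r hr
  refine ⟨hA, ?_, hB, hC⟩
  have ha : a r ≠ 0 := fun h => hne r hr (by rw [h]; ring)
  have hb : b r ≠ 0 := fun h => hne r hr (by rw [h]; ring)
  have hc : c r ≠ 0 := fun h => hne r hr (by rw [h]; ring)
  rw [hA, kappa]
  field_simp
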